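/- Let m be a positive integer and R a commutative ring in which the image of m is invertible. Then the natural R-algebra homomorphism R[X]/(X^m − 1) → ∏_{d ∣ m} R[X]/(Φ_d), whose component at each positive divisor d of m is the quotient map induced by the divisibility Φ_d ∣ X^m − 1 in R[X], is bijective. -/

import Mathlib

open Polynomial

set_option maxHeartbeats 1000000 in
/-- If `m` is invertible in a commutative ring `R`, the natural map
`R[X]/(X^m − 1) → ∏_{d ∣ m} R[X]/(Φ_d)` is bijective. -/
theorem group_algebra_cyclotomic_decomposition
    {R : Type*} [CommRing R] (m : ℕ) (hm : 0 < m) (hu : IsUnit (m : R)) :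
    Function.Bijective
      (Pi.ringHom (fun d : m.divisors =>
        Ideal.Quotient.factor
          (S := Ideal.span {(X : R[X]) ^ m - 1})
          (T := Ideal.span {Polynomial.cyclotomic (d : ℕ) R})
          (Ideal.span_singleton_le_span_singleton.mpr
            (Polynomial.prod_cyclotomic_eq_X_pow_sub_one hm R ▸
              Finset.dvd_prod_of_mem (fun i => Polynomial.cyclotomic i R) d.2)))) := by
  have hsep : ((X : R[X]) ^ m - 1).Separable := by
    simpa using Polynomial.separable_X_pow_sub_C_unit (1 : Rˣ) hu
  have hcop : ∀ (d e : m.divisors), d ≠ e →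
      IsCoprime (Polynomial.cyclotomic (d : ℕ) R) (Polynomial.cyclotomic (e : ℕ) R) := by
    intro d e hne
    have hdvd : Polynomial.cyclotomic (d : ℕ) R * Polynomial.cyclotomic (e : ℕ) R ∣
        (X : R[X]) ^ m - 1 := by
      rw [← Polynomial.prod_cyclotomic_eq_X_pow_sub_one hm R,
        show Polynomial.cyclotomic (d : ℕ) R * Polynomial.cyclotomic (e : ℕ) R
            = ∏ i ∈ ({(d : ℕ), (e : ℕ)} : Finset ℕ), Polynomial.cyclotomic i R from
          (Finset.prod_pair (f := fun i => Polynomial.cyclotomic i R) (Subtype.coe_injective.ne hne)).symm]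
      exact Finset.prod_dvd_prod_of_subset _ _ _ (by
        intro i hi
        simp only [Finset.mem_insert, Finset.mem_singleton] at hi
        rcases hi with rfl | rfl
        · exact d.2
        · exact e.2)
    exact (hsep.of_dvd hdvd).isCoprime
  set I : m.divisors → Ideal R[X] :=
    fun d => Ideal.span {Polynomial.cyclotomic (d : ℕ) R} with hI
  have hinf : Ideal.span {(X : R[X]) ^ m - 1} = ⨅ d, I d := by
    rw [hI, Ideal.iInf_span_singleton (fun i j h => hcop i j h),
      Finset.prod_coe_sort m.divisors (fun d => Polynomial.cyclotomic d R),
      Polynomial.prod_cyclotomic_eq_X_pow_sub_one hm R]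
  have hpair : Pairwise (Function.onFun IsCoprime I) := fun i j h =>
    (Ideal.isCoprime_span_singleton_iff _ _).mpr (hcop i j h)
  have key : (Pi.ringHom (fun d : m.divisors =>
        Ideal.Quotient.factor
          (S := Ideal.span {(X : R[X]) ^ m - 1})
          (T := Ideal.span {Polynomial.cyclotomic (d : ℕ) R})
          (Ideal.span_singleton_le_span_singleton.mpr
            (Polynomial.prod_cyclotomic_eq_X_pow_sub_one hm R ▸
              Finset.dvd_prod_of_mem (fun i => Polynomial.cyclotomic i R) d.2))))
      = (Ideal.quotientInfToPiQuotient I).comp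
          (Ideal.quotEquivOfEq hinf : R[X] ⧸ Ideal.span {(X : R[X]) ^ m - 1} ≃+* _) := by
    refine RingHom.ext fun y => ?_
    obtain ⟨x, rfl⟩ := Ideal.Quotient.mk_surjective y
    funext d
    simp [Pi.ringHom_apply, Ideal.Quotient.factor_mk, Ideal.quotEquivOfEq_mk, hI,
      Ideal.quotientInfToPiQuotient_mk']
    rfl
  rw [key, RingHom.coe_comp]
  exact Function.Bijective.comp
    ⟨Ideal.quotientInfToPiQuotient_inj I, Ideal.quotientInfToPiQuotient_surj hpair⟩
    (Ideal.quotEquivOfEq hinf).bijective
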